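/- In dimension 2, for x₁, x₂ with cos x₁ ≠ cos x₂, the triangular Dirichlet kernel D_n^1(x₁,x₂) = ∑_{(k₁,k₂)∈ℤ², |k₁|+|k₂|≤n} e^{i(k₁x₁+k₂x₂)} equals 2·(cos(x₁/2)cos((n+1/2)x₁) - cos(x₂/2)cos((n+1/2)x₂))/(cos x₁ - cos x₂). -/

import Mathlib

open Real Finset



private noncomputable def Tset (n : ℕ) : Finset (ℤ × ℤ) :=
  (Finset.Icc (-(n : ℤ)) (n : ℤ) ×ˢ Finset.Icc (-(n : ℤ)) (n : ℤ)).filter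
    (fun k => k.1.natAbs + k.2.natAbs ≤ n)

private lemma mem_Tset {n : ℕ} {k : ℤ × ℤ} : k ∈ Tset n ↔ k.1.natAbs + k.2.natAbs ≤ n := by
  simp only [Tset, Finset.mem_filter, Finset.mem_product, Finset.mem_Icc]
  omega

private noncomputable def Q (z w : ℂ) (m : ℕ) : ℂ := ∑ j ∈ Finset.range (m + 1), z ^ j * w ^ (m - j)

private lemma Q_mul (z w : ℂ) (hz : z ≠ 0) (hw : w ≠ 0) (m : ℕ) :
    (z + z⁻¹ - w - w⁻¹) * Q z w m =
      z ^ (m + 1) - z ^ m * w⁻¹ - w ^ (m + 1) + z⁻¹ * w ^ m := by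
  induction m with
  | zero =>
      rw [Q]
      norm_num [Finset.sum_range_one]
      ring
  | succ m ih =>
      have hQ : Q z w (m + 1) = z ^ (m + 1) + w * Q z w m := by
        rw [Q, Finset.sum_range_succ]
        have h : ∀ j ∈ Finset.range (m + 1),
            z ^ j * w ^ (m + 1 - j) = w * (z ^ j * w ^ (m - j)) := by
          intro j hj
          rw [Finset.mem_range] at hj
          rw [show m + 1 - j = (m - j) + 1 by omega, pow_succ]
          ring
        rw [Finset.sum_congr rfl h, ← Finset.mul_sum]
        simp only [Q, Nat.sub_self, pow_zero, mul_one]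
        ring
      rw [hQ]
      linear_combination w * ih + z ^ m * (inv_mul_cancel₀ hz) - z ^ m * (mul_inv_cancel₀ hw)

private lemma Icc_sum (g : ℤ → ℂ) (m : ℕ) :
    ∑ a ∈ Finset.Icc (-(m : ℤ)) (m : ℤ), g a + g 0 =
      ∑ j ∈ Finset.range (m + 1), g (j : ℤ) + ∑ j ∈ Finset.range (m + 1), g (-(j : ℤ)) := by
  have hs : ((Finset.range (m + 1)).image (fun j : ℕ => (j : ℤ))) ∪
      ((Finset.range (m + 1)).image (fun j : ℕ => -(j : ℤ))) = Finset.Icc (-(m : ℤ)) (m : ℤ) := by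
    ext a
    simp only [Finset.mem_union, Finset.mem_image, Finset.mem_range, Finset.mem_Icc]
    constructor
    · rintro (⟨j, hj, rfl⟩ | ⟨j, hj, rfl⟩) <;> omega
    · intro ha
      rcases le_or_gt 0 a with h0 | h0
      · exact Or.inl ⟨a.toNat, by omega, by omega⟩
      · exact Or.inr ⟨(-a).toNat, by omega, by omega⟩
  have hi : ((Finset.range (m + 1)).image (fun j : ℕ => (j : ℤ))) ∩
      ((Finset.range (m + 1)).image (fun j : ℕ => -(j : ℤ))) = {(0 : ℤ)} := by
    ext a
    simp only [Finset.mem_inter, Finset.mem_image, Finset.mem_range, Finset.mem_singleton]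
    constructor
    · rintro ⟨⟨j, hj, rfl⟩, ⟨j', hj', hj''⟩⟩; omega
    · rintro rfl
      exact ⟨⟨0, by omega, by simp⟩, ⟨0, by omega, by simp⟩⟩
  have h := Finset.sum_union_inter (s₁ := (Finset.range (m + 1)).image (fun j : ℕ => (j : ℤ)))
    (s₂ := (Finset.range (m + 1)).image (fun j : ℕ => -(j : ℤ))) (f := g)
  rw [hs, hi, Finset.sum_singleton] at h
  rw [h]
  rw [Finset.sum_image (fun a _ b _ h => by exact_mod_cast h),
    Finset.sum_image (fun a _ b _ h => by omega)]

private lemma layer_sum (z w : ℂ) (m : ℕ) (hm : 0 < m) :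
    ∑ k ∈ ((Finset.Icc (-(m : ℤ)) (m : ℤ) ×ˢ Finset.Icc (-(m : ℤ)) (m : ℤ)).filter
        (fun k => k.1.natAbs + k.2.natAbs = m)), z ^ k.1 * w ^ k.2 =
      Q z w m + Q z⁻¹ w m + Q z w⁻¹ m + Q z⁻¹ w⁻¹ m
        - z ^ m - z⁻¹ ^ m - w ^ m - w⁻¹ ^ m := by
  set s : Finset (ℤ × ℤ) :=
    (Finset.Icc (-(m : ℤ)) (m : ℤ)).image (fun a => (a, (m : ℤ) - a.natAbs)) with hs_def
  set t : Finset (ℤ × ℤ) :=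
    (Finset.Icc (-(m : ℤ)) (m : ℤ)).image (fun a => (a, -((m : ℤ) - a.natAbs))) with ht_def
  have hst : s ∪ t = ((Finset.Icc (-(m : ℤ)) (m : ℤ) ×ˢ Finset.Icc (-(m : ℤ)) (m : ℤ)).filter
      (fun k => k.1.natAbs + k.2.natAbs = m)) := by
    ext ⟨a, b⟩
    simp only [hs_def, ht_def, Finset.mem_union, Finset.mem_image, Finset.mem_Icc,
      Finset.mem_filter, Finset.mem_product, Prod.mk.injEq]
    constructor
    · rintro (⟨a', ⟨ha1, ha2⟩, rfl, rfl⟩ | ⟨a', ⟨ha1, ha2⟩, rfl, rfl⟩) <;>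
        refine ⟨⟨⟨ha1, ha2⟩, ?_, ?_⟩, ?_⟩ <;> omega
    · rintro ⟨⟨⟨ha1, ha2⟩, hb1, hb2⟩, habs⟩
      rcases le_or_gt 0 b with h0 | h0
      · exact Or.inl ⟨a, ⟨ha1, ha2⟩, rfl, by omega⟩
      · exact Or.inr ⟨a, ⟨ha1, ha2⟩, rfl, by omega⟩
  have hi : s ∩ t = {((m : ℤ), (0 : ℤ)), (-(m : ℤ), (0 : ℤ))} := by
    ext ⟨a, b⟩
    simp only [hs_def, ht_def, Finset.mem_inter, Finset.mem_image, Finset.mem_Icc,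
      Finset.mem_insert, Finset.mem_singleton, Prod.mk.injEq]
    constructor
    · rintro ⟨⟨a', ⟨ha1, ha2⟩, rfl, rfl⟩, ⟨a'', ⟨hb1, hb2⟩, rfl, hb3⟩⟩
      omega
    · rintro (⟨rfl, rfl⟩ | ⟨rfl, rfl⟩)
      · exact ⟨⟨(m : ℤ), by omega, rfl, by omega⟩, ⟨(m : ℤ), by omega, rfl, by omega⟩⟩
      · exact ⟨⟨-(m : ℤ), by omega, rfl, by omega⟩, ⟨-(m : ℤ), by omega, rfl, by omega⟩⟩
  have huni := Finset.sum_union_inter (s₁ := s) (s₂ := t) (f := fun k : ℤ × ℤ => z ^ k.1 * w ^ k.2)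
  rw [hst, hi] at huni
  have hpair : ∑ k ∈ ({((m : ℤ), (0 : ℤ)), (-(m : ℤ), (0 : ℤ))} : Finset (ℤ × ℤ)),
      z ^ k.1 * w ^ k.2 = z ^ m + z⁻¹ ^ m := by
    rw [Finset.sum_pair (by simp; omega)]
    simp [zpow_neg, zpow_natCast, inv_pow]
  have hinj1 : ∀ a ∈ Finset.Icc (-(m : ℤ)) (m : ℤ), ∀ b ∈ Finset.Icc (-(m : ℤ)) (m : ℤ),
      (fun a : ℤ => (a, (m : ℤ) - a.natAbs)) a = (fun a : ℤ => (a, (m : ℤ) - a.natAbs)) b →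
        a = b := fun a _ b _ h => (Prod.mk.injEq _ _ _ _ ▸ h :
          a = b ∧ (m : ℤ) - a.natAbs = (m : ℤ) - b.natAbs).1
  have hinj2 : ∀ a ∈ Finset.Icc (-(m : ℤ)) (m : ℤ), ∀ b ∈ Finset.Icc (-(m : ℤ)) (m : ℤ),
      (fun a : ℤ => (a, -((m : ℤ) - a.natAbs))) a = (fun a : ℤ => (a, -((m : ℤ) - a.natAbs))) b →
        a = b := fun a _ b _ h => (Prod.mk.injEq _ _ _ _ ▸ h :
          a = b ∧ -((m : ℤ) - a.natAbs) = -((m : ℤ) - b.natAbs)).1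
  have hQsum : ∀ u v : ℂ, ∑ a ∈ Finset.Icc (-(m : ℤ)) (m : ℤ),
      u ^ a * v ^ ((m : ℤ) - a.natAbs) = Q u v m + Q u⁻¹ v m - v ^ m := by
    intro u v
    have h := Icc_sum (fun a : ℤ => u ^ a * v ^ ((m : ℤ) - a.natAbs)) m
    have h1 : ∑ j ∈ Finset.range (m + 1),
        u ^ (j : ℤ) * v ^ ((m : ℤ) - (((j : ℤ).natAbs : ℤ))) = Q u v m := by
      rw [Q]
      refine Finset.sum_congr rfl fun j hj => ?_
      rw [Finset.mem_range] at hj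
      simp only [Int.natAbs_natCast]
      rw [show (m : ℤ) - (j : ℤ) = ((m - j : ℕ) : ℤ) by omega, zpow_natCast, zpow_natCast]
    have h2 : ∑ j ∈ Finset.range (m + 1),
        u ^ (-(j : ℤ)) * v ^ ((m : ℤ) - (((-(j : ℤ)).natAbs : ℤ))) = Q u⁻¹ v m := by
      rw [Q]
      refine Finset.sum_congr rfl fun j hj => ?_
      rw [Finset.mem_range] at hj
      simp only [Int.natAbs_neg, Int.natAbs_natCast]
      rw [show (m : ℤ) - (j : ℤ) = ((m - j : ℕ) : ℤ) by omega, zpow_neg, zpow_natCast,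
        zpow_natCast, inv_pow]
    rw [h1, h2] at h
    have h0 : u ^ (0 : ℤ) * v ^ ((m : ℤ) - (((0 : ℤ).natAbs : ℤ))) = v ^ m := by
      simp [zpow_natCast]
    rw [h0] at h
    linear_combination h
  have hsumS : ∑ k ∈ s, z ^ k.1 * w ^ k.2 = Q z w m + Q z⁻¹ w m - w ^ m := by
    rw [hs_def, Finset.sum_image hinj1]
    dsimp only
    exact hQsum z w
  have hsumT : ∑ k ∈ t, z ^ k.1 * w ^ k.2 = Q z w⁻¹ m + Q z⁻¹ w⁻¹ m - w⁻¹ ^ m := by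
    rw [ht_def, Finset.sum_image hinj2]
    dsimp only
    have := hQsum z w⁻¹
    rw [← this]
    refine Finset.sum_congr rfl fun a _ => ?_
    rw [zpow_neg, ← inv_zpow]
  rw [hpair, hsumS, hsumT] at huni
  linear_combination huni

private lemma key (z w : ℂ) (hz : z ≠ 0) (hw : w ≠ 0) (n : ℕ) :
    (z + z⁻¹ - w - w⁻¹) * ∑ k ∈ Tset n, z ^ k.1 * w ^ k.2 =
      z ^ (n + 1) + z⁻¹ ^ (n + 1) + z ^ n + z⁻¹ ^ n
        - w ^ (n + 1) - w⁻¹ ^ (n + 1) - w ^ n - w⁻¹ ^ n := by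
  induction n with
  | zero =>
      have h0 : Tset 0 = {((0 : ℤ), (0 : ℤ))} := by
        ext k
        rw [mem_Tset, Finset.mem_singleton, Prod.ext_iff]
        omega
      rw [h0, Finset.sum_singleton]
      norm_num
      ring
  | succ n ih =>
      have hsplit := Finset.sum_filter_add_sum_filter_not (Tset (n + 1))
        (fun k : ℤ × ℤ => k.1.natAbs + k.2.natAbs ≤ n) (fun k : ℤ × ℤ => z ^ k.1 * w ^ k.2)
      have h1 : (Tset (n + 1)).filter (fun k : ℤ × ℤ => k.1.natAbs + k.2.natAbs ≤ n) = Tset n := by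
        ext k
        simp only [Finset.mem_filter, mem_Tset]
        omega
      have h2 : (Tset (n + 1)).filter (fun k : ℤ × ℤ => ¬ k.1.natAbs + k.2.natAbs ≤ n) =
          ((Finset.Icc (-((n + 1 : ℕ) : ℤ)) ((n + 1 : ℕ) : ℤ) ×ˢ
            Finset.Icc (-((n + 1 : ℕ) : ℤ)) ((n + 1 : ℕ) : ℤ)).filter
            (fun k => k.1.natAbs + k.2.natAbs = n + 1)) := by
        ext k
        simp only [Finset.mem_filter, mem_Tset, Finset.mem_product, Finset.mem_Icc]
        omega
      rw [h1, h2] at hsplit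
      rw [← hsplit, layer_sum z w (n + 1) (by omega)]
      have hu : z * z⁻¹ = 1 := mul_inv_cancel₀ hz
      have hv : w * w⁻¹ = 1 := mul_inv_cancel₀ hw
      have q1 := Q_mul z w hz hw (n + 1)
      have q2 := Q_mul z⁻¹ w (inv_ne_zero hz) hw (n + 1)
      rw [inv_inv] at q2
      have q3 := Q_mul z w⁻¹ hz (inv_ne_zero hw) (n + 1)
      rw [inv_inv] at q3
      have q4 := Q_mul z⁻¹ w⁻¹ (inv_ne_zero hz) (inv_ne_zero hw) (n + 1)
      rw [inv_inv, inv_inv] at q4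
      linear_combination ih + q1 + q2 + q3 + q4 - (z ^ n + z⁻¹ ^ n) * hu + (w ^ n + w⁻¹ ^ n) * hv

private lemma real_num (n : ℕ) (x : ℝ) :
    2 * (Real.cos (x / 2) * Real.cos (((n : ℝ) + 1 / 2) * x)) =
      Real.cos (((n : ℝ) + 1) * x) + Real.cos ((n : ℝ) * x) := by
  have e1 : ((n : ℝ) + 1) * x = ((n : ℝ) + 1 / 2) * x + x / 2 := by ring
  have e2 : (n : ℝ) * x = ((n : ℝ) + 1 / 2) * x - x / 2 := by ring
  rw [e1, e2, Real.cos_add, Real.cos_sub]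
  ring

private lemma hpow (x : ℝ) (m : ℕ) :
    (Complex.exp (Complex.I * x)) ^ m + (Complex.exp (Complex.I * x))⁻¹ ^ m =
      2 * ((Real.cos ((m : ℝ) * x) : ℝ) : ℂ) := by
  rw [← Complex.exp_nat_mul, ← Complex.exp_neg, ← Complex.exp_nat_mul]
  rw [show (m : ℂ) * (Complex.I * (x : ℂ)) = ((((m : ℝ) * x : ℝ)) : ℂ) * Complex.I by
      push_cast; ring,
    show (m : ℂ) * (-(Complex.I * (x : ℂ))) = (-(((m : ℝ) * x : ℝ) : ℂ)) * Complex.I by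
      push_cast; ring,
    Complex.exp_mul_I, Complex.exp_mul_I, Complex.ofReal_cos]
  simp only [Complex.cos_neg, Complex.sin_neg]
  ring


/-- In dimension 2, for `x₁, x₂` with `cos x₁ ≠ cos x₂`, the triangular Dirichlet kernel
`D_n^1(x₁,x₂) = ∑_{(k₁,k₂)∈ℤ², |k₁|+|k₂|≤n} e^{i(k₁x₁+k₂x₂)}` equals
`2 (cos (x₁/2) cos ((n+1/2)x₁) - cos (x₂/2) cos ((n+1/2)x₂)) / (cos x₁ - cos x₂)`. -/
theorem triangular_dirichlet_kernel_eq (n : ℕ) (x₁ x₂ : ℝ)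
    (h : Real.cos x₁ ≠ Real.cos x₂) :
    ∑ k ∈ (Finset.Icc (-(n : ℤ)) (n : ℤ) ×ˢ Finset.Icc (-(n : ℤ)) (n : ℤ)).filter
        (fun k => k.1.natAbs + k.2.natAbs ≤ n),
      Complex.exp (Complex.I * ((k.1 : ℂ) * (x₁ : ℂ) + (k.2 : ℂ) * (x₂ : ℂ))) =
      ((2 * (Real.cos (x₁ / 2) * Real.cos (((n : ℝ) + 1 / 2) * x₁) -
          Real.cos (x₂ / 2) * Real.cos (((n : ℝ) + 1 / 2) * x₂)) /
        (Real.cos x₁ - Real.cos x₂) : ℝ) : ℂ) := by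
  set z : ℂ := Complex.exp (Complex.I * x₁) with hz_def
  set w : ℂ := Complex.exp (Complex.I * x₂) with hw_def
  have hz : z ≠ 0 := Complex.exp_ne_zero _
  have hw : w ≠ 0 := Complex.exp_ne_zero _
  have hterm : ∀ k : ℤ × ℤ,
      Complex.exp (Complex.I * ((k.1 : ℂ) * (x₁ : ℂ) + (k.2 : ℂ) * (x₂ : ℂ))) =
        z ^ k.1 * w ^ k.2 := by
    intro k
    rw [show Complex.I * ((k.1 : ℂ) * (x₁ : ℂ) + (k.2 : ℂ) * (x₂ : ℂ)) =
        (k.1 : ℂ) * (Complex.I * x₁) + (k.2 : ℂ) * (Complex.I * x₂) by ring,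
      Complex.exp_add, Complex.exp_int_mul, Complex.exp_int_mul]
  have hT : ∑ k ∈ (Finset.Icc (-(n : ℤ)) (n : ℤ) ×ˢ Finset.Icc (-(n : ℤ)) (n : ℤ)).filter
        (fun k => k.1.natAbs + k.2.natAbs ≤ n),
      Complex.exp (Complex.I * ((k.1 : ℂ) * (x₁ : ℂ) + (k.2 : ℂ) * (x₂ : ℂ))) =
      ∑ k ∈ Tset n, z ^ k.1 * w ^ k.2 :=
    Finset.sum_congr rfl fun k _ => hterm k
  rw [hT]
  have hnum : 2 * (Real.cos (x₁ / 2) * Real.cos (((n : ℝ) + 1 / 2) * x₁) -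
      Real.cos (x₂ / 2) * Real.cos (((n : ℝ) + 1 / 2) * x₂)) =
      Real.cos (((n : ℝ) + 1) * x₁) + Real.cos ((n : ℝ) * x₁)
        - (Real.cos (((n : ℝ) + 1) * x₂) + Real.cos ((n : ℝ) * x₂)) := by
    linear_combination real_num n x₁ - real_num n x₂
  rw [Complex.ofReal_div, hnum]
  have hden : ((Real.cos x₁ - Real.cos x₂ : ℝ) : ℂ) ≠ 0 :=
    Complex.ofReal_ne_zero.mpr (sub_ne_zero.mpr h)
  rw [eq_div_iff hden]
  have a0 : z + z⁻¹ = 2 * ((Real.cos x₁ : ℝ) : ℂ) := by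
    have := hpow x₁ 1
    rw [pow_one, pow_one, show ((1 : ℕ) : ℝ) * x₁ = x₁ by push_cast; ring] at this
    exact this
  have b0 : w + w⁻¹ = 2 * ((Real.cos x₂ : ℝ) : ℂ) := by
    have := hpow x₂ 1
    rw [pow_one, pow_one, show ((1 : ℕ) : ℝ) * x₂ = x₂ by push_cast; ring] at this
    exact this
  have a1 : z ^ (n + 1) + z⁻¹ ^ (n + 1) = 2 * ((Real.cos (((n : ℝ) + 1) * x₁) : ℝ) : ℂ) := by
    have := hpow x₁ (n + 1)
    rw [show (((n + 1 : ℕ) : ℝ)) = (n : ℝ) + 1 by push_cast; ring] at this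
    exact this
  have a2 : z ^ n + z⁻¹ ^ n = 2 * ((Real.cos ((n : ℝ) * x₁) : ℝ) : ℂ) := hpow x₁ n
  have b1 : w ^ (n + 1) + w⁻¹ ^ (n + 1) = 2 * ((Real.cos (((n : ℝ) + 1) * x₂) : ℝ) : ℂ) := by
    have := hpow x₂ (n + 1)
    rw [show (((n + 1 : ℕ) : ℝ)) = (n : ℝ) + 1 by push_cast; ring] at this
    exact this
  have b2 : w ^ n + w⁻¹ ^ n = 2 * ((Real.cos ((n : ℝ) * x₂) : ℝ) : ℂ) := hpow x₂ n
  have k := key z w hz hw n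
  push_cast [-Complex.ofReal_cos]
  linear_combination k / 2 - ((∑ k ∈ Tset n, z ^ k.1 * w ^ k.2) / 2) * a0
    + ((∑ k ∈ Tset n, z ^ k.1 * w ^ k.2) / 2) * b0 + a1 / 2 + a2 / 2 - b1 / 2 - b2 / 2
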